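/- Let P together with G = {g_1, …, g_k} and W = {w_1, …, w_k} be a full circulant polygon P_k^{k−1} with k ≥ 4. Then P has no holes, i.e., the complement ℝ² \ P has no bounded connected component. -/

import Mathlib

/-- Points of the Euclidean plane. -/
abbrev Pt := EuclideanSpace ℝ (Fin 2)

/-- Visibility region of `p` in `P`. -/
def Vis (P : Set Pt) (p : Pt) : Set Pt := {q ∈ P | segment ℝ p q ⊆ P}

/-- A polygonal region: a compact connected subset of the plane equal to the closure of
its interior, whose frontier is contained in finitely many closed segments. -/
def IsPolygonalRegion (P : Set Pt) : Prop :=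
  IsCompact P ∧ IsConnected P ∧ P = closure (interior P) ∧
  ∃ E : Finset (Pt × Pt), frontier P ⊆ ⋃ e ∈ E, segment ℝ e.1 e.2

/-- A full circulant polygon `P_k^{k-1}`: a polygonal region `P` with pairwise distinct
guards `g 0, …, g (k-1) ∈ P` and witnesses `w 0, …, w (k-1) ∈ P` such that
`V(g i) ∩ W = W \ {w i}` for all `i`, and every point of `P` sees at least `k - 1`
of the guards. -/
def IsFullCirculant (P : Set Pt) (k : ℕ) (g w : Fin k → Pt) : Prop :=
  IsPolygonalRegion P ∧
  Function.Injective g ∧ Function.Injective w ∧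
  (∀ i, g i ∈ P) ∧ (∀ i, w i ∈ P) ∧
  (∀ i, Vis P (g i) ∩ Set.range w = Set.range w \ {w i}) ∧
  (∀ p ∈ P, k - 1 ≤ (Vis P p ∩ Set.range g).ncard)

section NoHolesAux
open Set Metric Bornology RealInnerProductSpace
noncomputable section

/-- In the plane, every nonzero vector has a unit normal. -/
lemma exists_unit_perp (u : Pt) (hu : u ≠ 0) : ∃ m : Pt, ‖m‖ = 1 ∧ ⟪m, u⟫ = 0 := by
  have hne : (Submodule.span ℝ {u})ᗮ ≠ ⊥ := by
    intro hbot
    have h1 : Module.finrank ℝ (Submodule.span ℝ {u}) = 1 := finrank_span_singleton hu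
    have := Submodule.finrank_add_finrank_orthogonal (𝕜 := ℝ) (Submodule.span ℝ {u})
    rw [hbot, h1, finrank_euclideanSpace_fin] at this
    simp at this
  obtain ⟨b, hb, hb0⟩ := Submodule.exists_mem_ne_zero_of_ne_bot hne
  refine ⟨‖b‖⁻¹ • b, ?_, ?_⟩
  · rw [norm_smul, norm_inv, norm_norm]
    field_simp [norm_ne_zero_iff.mpr hb0]
  · have : ⟪b, u⟫ = 0 := by
      have := (Submodule.mem_orthogonal _ b).mp hb u (Submodule.mem_span_singleton_self u)
      rwa [real_inner_comm] at this
    rw [real_inner_smul_left, this, mul_zero]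

/-- In the plane, two vectors orthogonal to the same nonzero vector are parallel. -/
lemma perp_perp_parallel (m x y : Pt) (hm : m ≠ 0) (hx : ⟪m, x⟫ = 0) (hy : ⟪m, y⟫ = 0)
    (hx0 : x ≠ 0) : ∃ t : ℝ, y = t • x := by
  have hxW : x ∈ (Submodule.span ℝ {m})ᗮ := by
    rw [Submodule.mem_orthogonal]
    intro v hv
    obtain ⟨a, rfl⟩ := Submodule.mem_span_singleton.mp hv
    rw [real_inner_smul_left, hx, mul_zero]
  have hyW : y ∈ (Submodule.span ℝ {m})ᗮ := by
    rw [Submodule.mem_orthogonal]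
    intro v hv
    obtain ⟨a, rfl⟩ := Submodule.mem_span_singleton.mp hv
    rw [real_inner_smul_left, hy, mul_zero]
  have hWrank : Module.finrank ℝ ((Submodule.span ℝ {m})ᗮ) = 1 := by
    have h1 : Module.finrank ℝ (Submodule.span ℝ {m}) = 1 := finrank_span_singleton hm
    have h2 := Submodule.finrank_add_finrank_orthogonal (𝕜 := ℝ) (Submodule.span ℝ {m})
    rw [h1, finrank_euclideanSpace_fin] at h2
    linarith
  have hspan : Submodule.span ℝ {x} = (Submodule.span ℝ {m})ᗮ := by
    apply Submodule.eq_of_le_of_finrank_le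
    · rwa [Submodule.span_le, Set.singleton_subset_iff]
    · rw [hWrank, finrank_span_singleton hx0]
  have : y ∈ Submodule.span ℝ {x} := hspan ▸ hyW
  obtain ⟨t, ht⟩ := Submodule.mem_span_singleton.mp this
  exact ⟨t, ht.symm⟩

/-- The set of unit vectors orthogonal to a fixed nonzero vector is finite. -/
lemma finite_unit_perp (u : Pt) (hu : u ≠ 0) : {m : Pt | ‖m‖ = 1 ∧ ⟪m, u⟫ = 0}.Finite := by
  by_cases hne : {m : Pt | ‖m‖ = 1 ∧ ⟪m, u⟫ = 0}.Nonempty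
  · obtain ⟨m₀, hm₀n, hm₀p⟩ := hne
    have hm₀0 : m₀ ≠ 0 := by intro h; rw [h, norm_zero] at hm₀n; norm_num at hm₀n
    apply Set.Finite.subset ((Set.finite_singleton (-m₀)).insert m₀)
    rintro m ⟨hmn, hmp⟩
    rw [Set.mem_insert_iff, Set.mem_singleton_iff]
    have hperp : ⟪u, m⟫ = 0 := by rwa [real_inner_comm]
    have hperp₀ : ⟪u, m₀⟫ = 0 := by rwa [real_inner_comm]
    obtain ⟨t, ht⟩ := perp_perp_parallel u m₀ m hu hperp₀ hperp hm₀0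
    have : ‖m‖ = |t| * ‖m₀‖ := by rw [ht, norm_smul, Real.norm_eq_abs]
    rw [hmn, hm₀n, mul_one] at this
    have := this.symm
    rcases abs_eq (by norm_num : (0:ℝ) ≤ 1) |>.mp this with h | h
    · left; rw [ht, h, one_smul]
    · right; rw [ht, h]; simp
  · rw [Set.not_nonempty_iff_eq_empty] at hne
    rw [hne]; exact Set.finite_empty

/-- Near any unit vector there are unit vectors avoiding any finite bad set. -/
lemma exists_unit_near_avoiding (u : Pt) (hu : ‖u‖ = 1) (ε : ℝ) (hε : 0 < ε)
    (B : Set Pt) (hB : B.Finite) :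
    ∃ v : Pt, ‖v‖ = 1 ∧ ‖v - u‖ < ε ∧ v ∉ B := by
  have hu0 : u ≠ 0 := by intro h; rw [h, norm_zero] at hu; norm_num at hu
  obtain ⟨m, hmn, hmp⟩ := exists_unit_perp u hu0
  set f : ℝ → Pt := fun t => ‖u + t • m‖⁻¹ • (u + t • m) with hf
  have hα : ∀ t : ℝ, 0 ≤ t → 1 ≤ ‖u + t • m‖ ∧ ‖u + t • m‖ ≤ 1 + t := by
    intro t ht
    constructor
    · have h1 : ⟪u, u + t • m⟫ = 1 := by
        rw [inner_add_right, real_inner_smul_right, real_inner_comm m u, hmp,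
          real_inner_self_eq_norm_sq, hu]
        ring
      have := real_inner_le_norm u (u + t • m)
      rw [h1, hu, one_mul] at this
      exact this
    · calc ‖u + t • m‖ ≤ ‖u‖ + ‖t • m‖ := norm_add_le _ _
        _ = 1 + |t| * 1 := by rw [hu, norm_smul, Real.norm_eq_abs, hmn]
        _ = 1 + t := by rw [abs_of_nonneg ht]; ring
  have hδ : ∃ δ : ℝ, 0 < δ ∧ δ ≤ ε / 2 ∧ δ ≤ 1 := ⟨min (ε/2) 1, by positivity, min_le_left _ _, min_le_right _ _⟩
  obtain ⟨δ, hδ0, hδε, hδ1⟩ := hδ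
  -- f is injective on Ioo 0 δ
  have hinj : Set.InjOn f (Ioo 0 δ) := by
    intro s hs t ht hst
    have hspos : (0:ℝ) < s := hs.1
    have htpos : (0:ℝ) < t := ht.1
    have hsn : (0:ℝ) < ‖u + s • m‖ := lt_of_lt_of_le one_pos (hα s hspos.le).1
    have htn : (0:ℝ) < ‖u + t • m‖ := lt_of_lt_of_le one_pos (hα t htpos.le).1
    -- take inner products with m
    have h1 : ⟪m, f s⟫ = ‖u + s • m‖⁻¹ * s := by
      rw [hf]; simp only
      rw [real_inner_smul_right, inner_add_right, hmp, real_inner_smul_right,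
        real_inner_self_eq_norm_sq, hmn]
      ring
    have h2 : ⟪m, f t⟫ = ‖u + t • m‖⁻¹ * t := by
      rw [hf]; simp only
      rw [real_inner_smul_right, inner_add_right, hmp, real_inner_smul_right,
        real_inner_self_eq_norm_sq, hmn]
      ring
    have h3 : ⟪u, f s⟫ = ‖u + s • m‖⁻¹ := by
      rw [hf]; simp only
      rw [real_inner_smul_right, inner_add_right, real_inner_smul_right,
        real_inner_comm m u, hmp, real_inner_self_eq_norm_sq, hu]
      ring
    have h4 : ⟪u, f t⟫ = ‖u + t • m‖⁻¹ := by
      rw [hf]; simp only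
      rw [real_inner_smul_right, inner_add_right, real_inner_smul_right,
        real_inner_comm m u, hmp, real_inner_self_eq_norm_sq, hu]
      ring
    have hinv : ‖u + s • m‖⁻¹ = ‖u + t • m‖⁻¹ := by rw [← h3, ← h4, hst]
    have : ‖u + s • m‖⁻¹ * s = ‖u + t • m‖⁻¹ * t := by rw [← h1, ← h2, hst]
    rw [hinv] at this
    exact mul_left_cancel₀ (by positivity) this
  have hIooInf : (Set.Ioo (0:ℝ) δ).Infinite := Set.Ioo_infinite hδ0
  have himgInf : (f '' (Ioo 0 δ)).Infinite := Set.Infinite.image hinj hIooInf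
  have hdiff : ((f '' (Ioo 0 δ)) \ B).Infinite := Set.Infinite.diff himgInf hB
  obtain ⟨v, ⟨⟨t, ht, rfl⟩, hvB⟩⟩ := hdiff.nonempty
  have htpos := ht.1
  have htδ := ht.2
  have hn1 : (0:ℝ) < ‖u + t • m‖ := lt_of_lt_of_le one_pos (hα t htpos.le).1
  refine ⟨f t, ?_, ?_, hvB⟩
  · rw [hf]; simp only
    rw [norm_smul, norm_inv, norm_norm]
    field_simp
  · -- ‖f t - u‖ ≤ 2 t < ε
    have key : f t - u = (‖u + t • m‖⁻¹ - 1) • u + (‖u + t • m‖⁻¹ * t) • m := by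
      rw [hf]; simp only
      rw [smul_add, sub_smul, one_smul, smul_smul]
      abel
    have hb1 : |‖u + t • m‖⁻¹ - 1| ≤ t := by
      have h1 : ‖u + t • m‖⁻¹ ≤ 1 := by
        rw [inv_le_one_iff₀]; right; exact (hα t htpos.le).1
      have h2 : 1 - t ≤ ‖u + t • m‖⁻¹ := by
        have h3 : ‖u + t • m‖ ≤ 1 + t := (hα t htpos.le).2
        have h4 : (1 + t)⁻¹ ≤ ‖u + t • m‖⁻¹ := by
          apply inv_anti₀ hn1 h3
        have h5 : 1 - t ≤ (1+t)⁻¹ := by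
          have hpos : (0:ℝ) < 1 + t := by linarith
          have hinv : (1+t) * (1+t)⁻¹ = 1 := mul_inv_cancel₀ (ne_of_gt hpos)
          nlinarith [sq_nonneg t]
        linarith
      rw [abs_le]; constructor <;> linarith
    have hb2 : ‖u + t • m‖⁻¹ * t ≤ t := by
      have h1 : ‖u + t • m‖⁻¹ ≤ 1 := by
        rw [inv_le_one_iff₀]; right; exact (hα t htpos.le).1
      nlinarith
    calc ‖f t - u‖ ≤ ‖(‖u + t • m‖⁻¹ - 1) • u‖ + ‖(‖u + t • m‖⁻¹ * t) • m‖ := by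
          rw [key]; exact norm_add_le _ _
      _ = |‖u + t • m‖⁻¹ - 1| * 1 + |‖u + t • m‖⁻¹ * t| * 1 := by
          rw [norm_smul, norm_smul, Real.norm_eq_abs, Real.norm_eq_abs, hu, hmn]
      _ ≤ t + t := by
          have : |‖u + t • m‖⁻¹ * t| = ‖u + t • m‖⁻¹ * t := abs_of_nonneg (by positivity)
          rw [this]; simp only [mul_one]; linarith
      _ < ε := by linarith [htδ, hδε.trans_lt (by linarith : ε/2 < ε)]

/-! ### Lines -/

def LineSet (a d : Pt) : Set Pt := {x | ∃ t : ℝ, x = a + t • d}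

lemma segment_subset_lineSet (a b : Pt) : segment ℝ a b ⊆ LineSet a (b - a) := by
  rw [segment_eq_image']
  rintro x ⟨t, _, rfl⟩
  exact ⟨t, rfl⟩

lemma lineSet_eq_of_mem {a d x y : Pt} (hx : x ∈ LineSet a d) (hy : y ∈ LineSet a d)
    (hxy : x ≠ y) : LineSet a d = LineSet x (y - x) := by
  obtain ⟨s, rfl⟩ := hx
  obtain ⟨t, rfl⟩ := hy
  have hst : s ≠ t := by rintro rfl; exact hxy rfl
  have hts : t - s ≠ 0 := sub_ne_zero.mpr (Ne.symm hst)
  have hyx : (a + t • d) - (a + s • d) = (t - s) • d := by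
    rw [sub_smul]; abel
  ext w
  constructor
  · rintro ⟨r, rfl⟩
    refine ⟨(r - s)/(t - s), ?_⟩
    rw [hyx, smul_smul, div_mul_cancel₀ _ hts, sub_smul]
    abel
  · rintro ⟨r, rfl⟩
    refine ⟨s + r * (t - s), ?_⟩
    rw [hyx, smul_smul, add_smul]
    abel

lemma lineSet_inter_finite {a d a' d' : Pt} (h : LineSet a d ≠ LineSet a' d') :
    (LineSet a d ∩ LineSet a' d').Finite := by
  apply Set.Subsingleton.finite
  intro x hx y hy
  by_contra hxy
  exact h ((lineSet_eq_of_mem hx.1 hy.1 hxy).trans (lineSet_eq_of_mem hx.2 hy.2 hxy).symm)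

lemma inner_sub_lineSet {a d m y z : Pt} (hy : y ∈ LineSet a d) (hz : z ∈ LineSet a d)
    (hm : ⟪m, d⟫ = 0) : ⟪m, y - z⟫ = 0 := by
  obtain ⟨t, rfl⟩ := hy
  obtain ⟨s, rfl⟩ := hz
  have : (a + t • d) - (a + s • d) = (t - s) • d := by rw [sub_smul]; abel
  rw [this, real_inner_smul_right, hm, mul_zero]

lemma isClosed_segment (a b : Pt) : IsClosed (segment ℝ a b) := by
  rw [segment_eq_image']
  exact (isCompact_Icc.image (by continuity)).isClosed

/-! ### Holes -/

/-- A point of the closure of the hole that is not in `P` belongs to the hole. -/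
lemma mem_hole_of_closure {P : Set Pt} {p₀ : Pt} (hP : IsClosed P) (hp₀ : p₀ ∉ P) {y : Pt}
    (hy : y ∈ closure (connectedComponentIn Pᶜ p₀)) (hyP : y ∉ P) :
    y ∈ connectedComponentIn Pᶜ p₀ := by
  obtain ⟨ε, hε, hball⟩ := Metric.isOpen_iff.mp hP.isOpen_compl y hyP
  obtain ⟨q, hq1, hq2⟩ := mem_closure_iff.mp hy (ball y ε) isOpen_ball (mem_ball_self hε)
  have hpre : IsPreconnected (ball y ε ∪ connectedComponentIn Pᶜ p₀) :=
    IsPreconnected.union q hq1 hq2 (convex_ball y ε).isPreconnected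
      isPreconnected_connectedComponentIn
  have hsub : ball y ε ∪ connectedComponentIn Pᶜ p₀ ⊆ Pᶜ :=
    union_subset hball (connectedComponentIn_subset _ _)
  have hp0mem : p₀ ∈ ball y ε ∪ connectedComponentIn Pᶜ p₀ :=
    Or.inr (mem_connectedComponentIn hp₀)
  exact (hpre.subset_connectedComponentIn hp0mem hsub) (Or.inl (mem_ball_self hε))

/-- `m` is a supporting unit normal at `z` for the hole of `p₀`:
locally, on the negative side of `z` in direction `m`, everything is in the hole,
and `p₀` itself is strictly on the negative side of the supporting line. -/
def SuppAt (P : Set Pt) (p₀ m z : Pt) : Prop :=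
  z ∈ P ∧ ⟪m, p₀ - z⟫ < 0 ∧
    ∃ δ : ℝ, 0 < δ ∧ ∀ y : Pt, dist y z < δ → ⟪m, y - z⟫ < 0 →
      y ∈ connectedComponentIn Pᶜ p₀

/-- Main geometric construction: in any approximate direction `u`, there is a supporting
normal (orthogonal to one of the finitely many frontier segments). -/
lemma exists_support_near {P : Set Pt} (hP : IsClosed P) {E : Finset (Pt × Pt)}
    (hfr : frontier P ⊆ ⋃ e ∈ E, segment ℝ e.1 e.2) {p₀ : Pt} (hp₀ : p₀ ∉ P)
    (hb : IsBounded (connectedComponentIn Pᶜ p₀))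
    (u : Pt) (hu : ‖u‖ = 1) (ε : ℝ) (hε : 0 < ε) :
    ∃ m z : Pt, ‖m‖ = 1 ∧ (∃ e ∈ E, e.2 - e.1 ≠ 0 ∧ ⟪m, e.2 - e.1⟫ = 0) ∧
      -ε < ⟪m, u⟫ ∧ SuppAt P p₀ m z := by
  classical
  set H := connectedComponentIn Pᶜ p₀ with hH
  have hHopen : IsOpen H := hP.isOpen_compl.connectedComponentIn
  have hp₀H : p₀ ∈ H := mem_connectedComponentIn hp₀
  -- the finite set of special points
  set LS : Pt × Pt → Set Pt := fun e => LineSet e.1 (e.2 - e.1) with hLS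
  set W : Set Pt := (⋃ e ∈ (E : Set (Pt × Pt)), ({e.1, e.2} : Set Pt)) ∪
      (⋃ e ∈ (E : Set (Pt × Pt)), ⋃ e' ∈ (E : Set (Pt × Pt)),
        {x | x ∈ LS e ∧ x ∈ LS e' ∧ LS e ≠ LS e'}) with hW
  have hWfin : W.Finite := by
    apply Set.Finite.union
    · exact Set.Finite.biUnion E.finite_toSet
        (fun e _ => (Set.finite_singleton e.2).insert e.1)
    · apply Set.Finite.biUnion E.finite_toSet
      intro e _
      apply Set.Finite.biUnion E.finite_toSet
      intro e' _
      by_cases hee : LS e = LS e'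
      · have : {x | x ∈ LS e ∧ x ∈ LS e' ∧ LS e ≠ LS e'} = ∅ := by
          ext x; simp only [Set.mem_setOf_eq, Set.mem_empty_iff_false, iff_false]
          rintro ⟨_, _, hne⟩; exact hne hee
        rw [this]; exact Set.finite_empty
      · exact (lineSet_inter_finite hee).subset (fun x hx => ⟨hx.1, hx.2.1⟩)
  -- the finite set of bad directions
  set Bdir : Set Pt := (⋃ x ∈ W, {v : Pt | ‖v‖ = 1 ∧ x - p₀ ≠ 0 ∧ ∃ c : ℝ, x - p₀ = c • v}) ∪
      (⋃ e ∈ (E : Set (Pt × Pt)), {v : Pt | ‖v‖ = 1 ∧ e.2 - e.1 ≠ 0 ∧ ∃ c : ℝ, e.2 - e.1 = c • v})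
      with hBdir
  have hunitscaled : ∀ d : Pt, {v : Pt | ‖v‖ = 1 ∧ d ≠ 0 ∧ ∃ c : ℝ, d = c • v}.Finite := by
    intro d
    by_cases hd : d = 0
    · have : {v : Pt | ‖v‖ = 1 ∧ d ≠ 0 ∧ ∃ c : ℝ, d = c • v} = ∅ := by
        ext v; simp only [Set.mem_setOf_eq, Set.mem_empty_iff_false, iff_false]
        rintro ⟨_, hd', _⟩; exact hd' hd
      rw [this]; exact Set.finite_empty
    · apply Set.Finite.subset ((Set.finite_singleton (-(‖d‖⁻¹ • d))).insert (‖d‖⁻¹ • d))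
      rintro v ⟨hv1, -, c, hc⟩
      have hc0 : c ≠ 0 := by rintro rfl; rw [zero_smul] at hc; exact hd hc
      have hvc : v = c⁻¹ • d := by rw [hc, smul_smul, inv_mul_cancel₀ hc0, one_smul]
      have hnc : |c⁻¹| * ‖d‖ = 1 := by
        rw [← Real.norm_eq_abs, ← norm_smul, ← hvc, hv1]
      have hdn : ‖d‖ ≠ 0 := norm_ne_zero_iff.mpr hd
      have habs : |c⁻¹| = ‖d‖⁻¹ := by field_simp at hnc ⊢; linarith [hnc]
      rw [Set.mem_insert_iff, Set.mem_singleton_iff]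
      rcases abs_eq (by positivity : (0:ℝ) ≤ ‖d‖⁻¹) |>.mp habs with h | h
      · left; rw [hvc, h]
      · right; rw [hvc, h, neg_smul]
  have hBfin : Bdir.Finite := by
    apply Set.Finite.union
    · exact Set.Finite.biUnion hWfin (fun x _ => hunitscaled (x - p₀))
    · exact Set.Finite.biUnion E.finite_toSet (fun e _ => hunitscaled (e.2 - e.1))
  -- choose a good direction near u
  obtain ⟨v, hv1, hvu, hvB⟩ := exists_unit_near_avoiding u hu ε hε Bdir hBfin
  -- first exit time
  set Tset : Set ℝ := {t : ℝ | 0 ≤ t ∧ p₀ + t • v ∉ H} with hTset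
  have hTclosed : IsClosed Tset := by
    have hcont : Continuous (fun t : ℝ => p₀ + t • v) :=
      continuous_const.add (continuous_id.smul continuous_const)
    have : Tset = Ici (0:ℝ) ∩ (fun t : ℝ => p₀ + t • v) ⁻¹' Hᶜ := by
      ext t; simp [hTset, Set.mem_setOf_eq, Set.mem_preimage]
    rw [this]
    exact isClosed_Ici.inter (hHopen.isClosed_compl.preimage hcont)
  have hTne : Tset.Nonempty := by
    obtain ⟨r, hr⟩ := hb.subset_ball p₀
    refine ⟨max r 1, le_trans zero_le_one (le_max_right r 1), ?_⟩
    intro hmem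
    have := hr hmem
    rw [mem_ball, dist_eq_norm] at this
    have heq : p₀ + (max r 1) • v - p₀ = (max r 1) • v := by abel
    rw [heq, norm_smul, hv1, mul_one, Real.norm_eq_abs,
      abs_of_nonneg (le_trans zero_le_one (le_max_right r 1))] at this
    have : r ≤ max r 1 := le_max_left r 1
    linarith [hr hmem, this]
  have hTbdd : BddBelow Tset := ⟨0, fun t ht => ht.1⟩
  set t₀ := sInf Tset with ht₀
  have ht₀mem : t₀ ∈ Tset := hTclosed.csInf_mem hTne hTbdd
  have ht₀nonneg : 0 ≤ t₀ := ht₀mem.1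
  set z := p₀ + t₀ • v with hz
  have hzH : z ∉ H := ht₀mem.2
  have ht₀pos : 0 < t₀ := by
    rcases lt_or_eq_of_le ht₀nonneg with h | h
    · exact h
    · exfalso; apply hzH; rw [hz, ← h, zero_smul, add_zero]; exact hp₀H
  have hbefore : ∀ t : ℝ, 0 ≤ t → t < t₀ → p₀ + t • v ∈ H := by
    intro t ht0 htt
    by_contra hmem
    exact absurd (csInf_le hTbdd ⟨ht0, hmem⟩) (not_le.mpr htt)
  have hzclos : z ∈ closure H := by
    have hcont : Continuous (fun t : ℝ => p₀ + t • v) :=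
      continuous_const.add (continuous_id.smul continuous_const)
    have h1 : z ∈ (fun t : ℝ => p₀ + t • v) '' closure (Ico 0 t₀) := by
      rw [closure_Ico (ne_of_lt ht₀pos)]
      exact ⟨t₀, right_mem_Icc.mpr ht₀nonneg, rfl⟩
    have h2 := image_closure_subset_closure_image (s := Ico 0 t₀) hcont h1
    refine closure_mono ?_ h2
    rintro y ⟨t, ⟨ht0, htt⟩, rfl⟩
    exact hbefore t ht0 htt
  have hzP : z ∈ P := by
    by_contra hzP
    exact hzH (mem_hole_of_closure hP hp₀ hzclos hzP)
  have hzfr : z ∈ frontier P := by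
    rw [hP.frontier_eq]
    refine ⟨hzP, fun hzint => ?_⟩
    obtain ⟨q, hq1, hq2⟩ := mem_closure_iff.mp hzclos (interior P) isOpen_interior hzint
    exact (connectedComponentIn_subset Pᶜ p₀ hq2) (interior_subset hq1)
  obtain ⟨e₀, he₀E, hze₀⟩ : ∃ e₀ ∈ E, z ∈ segment ℝ e₀.1 e₀.2 := by
    have := hfr hzfr
    simpa using this
  have hzp₀ : z ≠ p₀ := fun h => hp₀ (h ▸ hzP)
  have hzray : ∃ c : ℝ, z - p₀ = c • v := ⟨t₀, by rw [hz]; abel⟩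
  have hzW : z ∉ W := by
    intro hzW
    apply hvB
    rw [hBdir]
    exact Or.inl (Set.mem_biUnion hzW ⟨hv1, fun h => hzp₀ (by rwa [sub_eq_zero] at h), hzray⟩)
  have hd₀ : e₀.2 - e₀.1 ≠ 0 := by
    intro h0
    have : e₀.2 = e₀.1 := by rwa [sub_eq_zero] at h0
    rw [this, segment_same] at hze₀
    apply hzW
    rw [hW]
    exact Or.inl (Set.mem_biUnion he₀E (by rw [hze₀]; exact Or.inl rfl))
  -- the unit normal, oriented towards v
  obtain ⟨m₀, hm₀1, hm₀p⟩ := exists_unit_perp (e₀.2 - e₀.1) hd₀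
  have hm₀0 : m₀ ≠ 0 := fun h => by rw [h, norm_zero] at hm₀1; norm_num at hm₀1
  have hmv0 : ⟪m₀, v⟫ ≠ 0 := by
    intro hperp
    have hv0 : v ≠ 0 := fun h => by rw [h, norm_zero] at hv1; norm_num at hv1
    obtain ⟨c, hc⟩ := perp_perp_parallel m₀ v (e₀.2 - e₀.1) hm₀0 hperp hm₀p hv0
    apply hvB
    rw [hBdir]
    exact Or.inr (Set.mem_biUnion he₀E ⟨hv1, hd₀, c, hc⟩)
  set m := if 0 < ⟪m₀, v⟫ then m₀ else -m₀ with hm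
  have hm1 : ‖m‖ = 1 := by
    rw [hm]; split <;> simp [hm₀1]
  have hmperp : ⟪m, e₀.2 - e₀.1⟫ = 0 := by
    rw [hm]; split
    · exact hm₀p
    · rw [inner_neg_left, hm₀p, neg_zero]
  have hmv : 0 < ⟪m, v⟫ := by
    rw [hm]; split
    · assumption
    · rw [inner_neg_left]
      rcases lt_trichotomy (⟪m₀, v⟫ : ℝ) 0 with h | h | h
      · linarith
      · exact absurd h hmv0
      · exact absurd h (by assumption)
  -- the safety radius
  set F₁ : Set Pt := ⋃ e ∈ {e ∈ (E : Set (Pt × Pt)) | z ∉ segment ℝ e.1 e.2},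
      segment ℝ e.1 e.2 with hF₁
  have hF₁closed : IsClosed F₁ :=
    Set.Finite.isClosed_biUnion (E.finite_toSet.sep _) (fun e _ => isClosed_segment e.1 e.2)
  have hzF₁ : z ∉ F₁ := by
    intro hmem
    rw [hF₁] at hmem
    obtain ⟨e, he, hze⟩ := Set.mem_iUnion₂.mp hmem
    exact he.2 hze
  obtain ⟨δ₁, hδ₁pos, hδ₁ball⟩ : ∃ δ₁ > 0, ball z δ₁ ⊆ F₁ᶜ :=
    Metric.isOpen_iff.mp hF₁closed.isOpen_compl z hzF₁
  -- locally, the frontier is contained in the line of e₀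
  have hlocal : ∀ y ∈ ball z δ₁, y ∈ frontier P → y ∈ LS e₀ := by
    intro y hyball hyfr
    obtain ⟨e', he'E, hye'⟩ : ∃ e' ∈ E, y ∈ segment ℝ e'.1 e'.2 := by simpa using hfr hyfr
    by_cases hze' : z ∈ segment ℝ e'.1 e'.2
    · by_cases hLL : LS e' = LS e₀
      · rw [← hLL]
        exact segment_subset_lineSet e'.1 e'.2 hye'
      · exfalso
        apply hzW
        rw [hW]
        refine Or.inr (Set.mem_biUnion he'E (Set.mem_biUnion he₀E ?_))
        exact ⟨segment_subset_lineSet e'.1 e'.2 hze', segment_subset_lineSet e₀.1 e₀.2 hze₀, hLL⟩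
    · exfalso
      apply hδ₁ball hyball
      rw [hF₁]
      exact Set.mem_biUnion ⟨he'E, hze'⟩ hye'
  -- the negative half ball
  set Bm : Set Pt := {y | dist y z < δ₁ ∧ ⟪m, y - z⟫ < 0} with hBm
  have hBmconv : Convex ℝ Bm := by
    have h1 : Bm = ball z δ₁ ∩ {y : Pt | ⟪m, y⟫ < ⟪m, z⟫} := by
      ext y
      simp only [hBm, Set.mem_setOf_eq, Set.mem_inter_iff, mem_ball, inner_sub_right]
      constructor
      · rintro ⟨h1, h2⟩; exact ⟨h1, by linarith⟩
      · rintro ⟨h1, h2⟩; exact ⟨h1, by linarith⟩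
    rw [h1]
    refine (convex_ball z δ₁).inter ?_
    exact convex_halfSpace_lt ⟨fun a b => inner_add_right m a b,
      fun c a => real_inner_smul_right m a c⟩ _
  -- the witness point deep in the hole
  set s₀ : ℝ := min (t₀/2) (δ₁/2) with hs₀
  have hs₀pos : 0 < s₀ := lt_min (by linarith) (by linarith)
  set y₀ := p₀ + (t₀ - s₀) • v with hy₀
  have hy₀H : y₀ ∈ H := hbefore _ (by rw [hs₀]; have := min_le_left (t₀/2) (δ₁/2); linarith)
    (by have := hs₀pos; linarith)
  have hy₀z : y₀ - z = -(s₀ • v) := by rw [hy₀, hz, sub_smul]; abel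
  have hy₀Bm : y₀ ∈ Bm := by
    constructor
    · rw [dist_eq_norm, hy₀z, norm_neg, norm_smul, hv1, mul_one, Real.norm_eq_abs,
        abs_of_pos hs₀pos]
      have := min_le_right (t₀/2) (δ₁/2)
      rw [hs₀]; linarith
    · rw [hy₀z, inner_neg_right, real_inner_smul_right]
      have : 0 < s₀ * ⟪m, v⟫ := mul_pos hs₀pos hmv
      linarith
  -- Bm avoids the frontier
  have hBmfr : ∀ y ∈ Bm, y ∉ frontier P := by
    rintro y ⟨hyb, hyneg⟩ hyfr
    have hyL : y ∈ LS e₀ := hlocal y (by rwa [mem_ball]) hyfr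
    have hzL : z ∈ LS e₀ := segment_subset_lineSet e₀.1 e₀.2 hze₀
    have : ⟪m, y - z⟫ = 0 := inner_sub_lineSet hyL hzL hmperp
    linarith
  -- Bm is inside the hole
  have hBmH : Bm ⊆ H := by
    have hsplit : Bm ⊆ interior P ∪ Pᶜ := by
      intro y hy
      by_cases hyP : y ∈ P
      · left
        have := hBmfr y hy
        rw [hP.frontier_eq] at this
        by_contra hyint
        exact this ⟨hyP, hyint⟩
      · exact Or.inr hyP
    have hdisj : Disjoint (interior P) Pᶜ :=
      Set.disjoint_left.mpr (fun a ha hac => hac (interior_subset ha))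
    rcases hBmconv.isPreconnected.subset_or_subset isOpen_interior hP.isOpen_compl hdisj
        hsplit with h | h
    · exfalso
      exact (connectedComponentIn_subset Pᶜ p₀ hy₀H) (interior_subset (h hy₀Bm))
    · have hpre : IsPreconnected (Bm ∪ H) :=
        IsPreconnected.union y₀ hy₀Bm hy₀H hBmconv.isPreconnected
          isPreconnected_connectedComponentIn
      have hsub : Bm ∪ H ⊆ Pᶜ := union_subset h (connectedComponentIn_subset _ _)
      have := hpre.subset_connectedComponentIn (Or.inr hp₀H) hsub
      exact fun y hy => this (Or.inl hy)
  -- wrap up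
  refine ⟨m, z, hm1, ⟨e₀, he₀E, hd₀, hmperp⟩, ?_, hzP, ?_, δ₁, hδ₁pos, ?_⟩
  · have hsplit : (⟪m, u⟫ : ℝ) = ⟪m, v⟫ + ⟪m, u - v⟫ := by
      rw [← inner_add_right]
      congr 1
      abel
    have hbound : |(⟪m, u - v⟫ : ℝ)| ≤ ‖u - v‖ := by
      have := abs_real_inner_le_norm m (u - v)
      rwa [hm1, one_mul] at this
    have h1 : -(ε) < (⟪m, u - v⟫ : ℝ) := by
      have h2 : ‖u - v‖ < ε := by rwa [norm_sub_rev]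
      have := neg_abs_le (⟪m, u - v⟫ : ℝ)
      linarith
    rw [hsplit]
    linarith
  · have : p₀ - z = -(t₀ • v) := by rw [hz]; abel
    rw [this, inner_neg_right, real_inner_smul_right]
    have : 0 < t₀ * ⟪m, v⟫ := mul_pos ht₀pos hmv
    linarith
  · intro y hyd hyneg
    exact hBmH ⟨hyd, hyneg⟩

/-! ### Counting -/


lemma suppAt_at_most_one_bad {P : Set Pt} {p₀ : Pt} {k : ℕ} (hk : 4 ≤ k)
    {g : Fin k → Pt} (hginj : Function.Injective g)
    (hcount : ∀ p ∈ P, k - 1 ≤ (Vis P p ∩ Set.range g).ncard)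
    {m z : Pt} (hsupp : SuppAt P p₀ m z) {i j : Fin k} (hij : i ≠ j)
    (hi : ⟪m, g i - z⟫ < 0) (hj : ⟪m, g j - z⟫ < 0) : False := by
  obtain ⟨hzP, -, δ, hδpos, hball⟩ := hsupp
  have hblocked : ∀ l : Fin k, ⟪m, g l - z⟫ < 0 → g l ∉ Vis P z := by
    intro l hl hvis
    have hglz : g l - z ≠ 0 := by
      intro h0
      rw [h0, inner_zero_right] at hl
      exact lt_irrefl 0 hl
    have hnorm : 0 < ‖g l - z‖ := norm_pos_iff.mpr hglz
    set t : ℝ := min (1/2) (δ/(2*‖g l - z‖)) with ht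
    have htpos : 0 < t := lt_min (by norm_num) (by positivity)
    have ht1 : t ≤ 1 := le_trans (min_le_left _ _) (by norm_num)
    set q := z + t • (g l - z) with hq
    have hqseg : q ∈ segment ℝ z (g l) := by
      rw [segment_eq_image']
      exact ⟨t, ⟨htpos.le, ht1⟩, rfl⟩
    have hqP : q ∈ P := hvis.2 hqseg
    have hqz : q - z = t • (g l - z) := by rw [hq]; abel
    have hqH : q ∈ connectedComponentIn Pᶜ p₀ := by
      apply hball
      · rw [dist_eq_norm, hqz, norm_smul, Real.norm_eq_abs, abs_of_pos htpos]
        have h2 : t ≤ δ/(2*‖g l - z‖) := min_le_right _ _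
        have h3 : t * ‖g l - z‖ ≤ δ/2 := by
          have h4 := mul_le_mul_of_nonneg_right h2 hnorm.le
          have h5 : (δ/(2*‖g l - z‖)) * ‖g l - z‖ = δ/2 := by
            field_simp
          linarith
        linarith
      · rw [hqz, real_inner_smul_right]
        exact mul_neg_of_pos_of_neg htpos hl
    exact (connectedComponentIn_subset Pᶜ p₀ hqH) hqP
  have hsub : Vis P z ∩ Set.range g ⊆ Set.range g \ {g i, g j} := by
    rintro x ⟨hxv, l, rfl⟩
    refine ⟨⟨l, rfl⟩, ?_⟩
    rw [Set.mem_insert_iff, Set.mem_singleton_iff]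
    rintro (h | h)
    · exact hblocked l (hginj h ▸ hi) hxv
    · exact hblocked l (hginj h ▸ hj) hxv
  have hrange : (Set.range g).ncard = k := by
    rw [← Set.image_univ, Set.ncard_image_of_injective _ hginj, Set.ncard_univ,
      Nat.card_eq_fintype_card, Fintype.card_fin]
  have hpair : ({g i, g j} : Set Pt) ⊆ Set.range g := by
    rintro x (h | h)
    · exact ⟨i, h.symm⟩
    · exact ⟨j, (Set.mem_singleton_iff.mp h).symm⟩
  have hdiff : (Set.range g \ {g i, g j} : Set Pt).ncard = k - 2 := by
    rw [Set.ncard_diff hpair, hrange, Set.ncard_pair (fun h => hij (hginj h))]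
  have h1 : k - 1 ≤ (Vis P z ∩ Set.range g).ncard := hcount z hzP
  have h2 : (Vis P z ∩ Set.range g).ncard ≤ k - 2 := by
    rw [← hdiff]
    exact Set.ncard_le_ncard hsub ((Set.finite_range g).diff)
  omega

/-! ### Endgame -/

theorem no_bounded_component {P : Set Pt} (hP : IsClosed P) {E : Finset (Pt × Pt)}
    (hfr : frontier P ⊆ ⋃ e ∈ E, segment ℝ e.1 e.2) {k : ℕ} (hk : 4 ≤ k)
    {g : Fin k → Pt} (hginj : Function.Injective g)
    (hcount : ∀ p ∈ P, k - 1 ≤ (Vis P p ∩ Set.range g).ncard)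
    {p₀ : Pt} (hp₀ : p₀ ∉ P) (hb : IsBounded (connectedComponentIn Pᶜ p₀)) : False := by
  classical
  set S : Set Pt := {m | ‖m‖ = 1 ∧ (∃ e ∈ E, e.2 - e.1 ≠ 0 ∧ ⟪m, e.2 - e.1⟫ = 0) ∧
      ∃ z, SuppAt P p₀ m z} with hS
  have hSfin : S.Finite := by
    have hsub : S ⊆ ⋃ e ∈ (E : Set (Pt × Pt)),
        {m : Pt | ‖m‖ = 1 ∧ (e.2 - e.1 ≠ 0 ∧ ⟪m, e.2 - e.1⟫ = 0)} := by
      rintro x ⟨hx1, ⟨e, heE, hd, hperp⟩, -⟩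
      exact Set.mem_biUnion heE ⟨hx1, hd, hperp⟩
    apply Set.Finite.subset _ hsub
    apply Set.Finite.biUnion E.finite_toSet
    intro e _
    by_cases hd : e.2 - e.1 = 0
    · have : {m : Pt | ‖m‖ = 1 ∧ (e.2 - e.1 ≠ 0 ∧ ⟪m, e.2 - e.1⟫ = 0)} = ∅ := by
        ext x
        simp only [Set.mem_setOf_eq, Set.mem_empty_iff_false, iff_false]
        rintro ⟨-, hd', -⟩; exact hd' hd
      rw [this]; exact Set.finite_empty
    · exact (finite_unit_perp _ hd).subset (fun x hx => ⟨hx.1, hx.2.2⟩)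
  have hSany : ∀ u : Pt, ‖u‖ = 1 → ∀ ε : ℝ, 0 < ε → ∃ m ∈ S, -ε < ⟪m, u⟫ := by
    intro u hu ε hε
    obtain ⟨m, z, hm1, he, hmu, hsupp⟩ := exists_support_near hP hfr hp₀ hb u hu ε hε
    exact ⟨m, ⟨hm1, he, z, hsupp⟩, hmu⟩
  -- a choice of support point for each normal
  set zfun : Pt → Pt := fun m => if h : ∃ z, SuppAt P p₀ m z then h.choose else 0 with hzfun
  have hzprop : ∀ m ∈ S, SuppAt P p₀ m (zfun m) := by
    intro m hm
    obtain ⟨-, -, hex⟩ := hm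
    rw [hzfun]
    simp only [dif_pos hex]
    exact hex.choose_spec
  -- a fixed unit vector
  have hunit : ∃ u : Pt, ‖u‖ = 1 := by
    refine ⟨EuclideanSpace.single (0 : Fin 2) (1 : ℝ), ?_⟩
    rw [EuclideanSpace.norm_single]
    norm_num
  by_cases hin : (0 : Pt) ∈ convexHull ℝ S
  · -- Carathéodory and counting
    obtain ⟨ι, hι, zz, wf, hrange, hai, hwpos, hwsum, hwzero⟩ :=
      eq_pos_convex_span_of_mem_convexHull hin
    have hne : Nonempty ι := by
      by_contra hem
      rw [not_nonempty_iff] at hem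
      rw [Finset.univ_eq_empty, Finset.sum_empty] at hwsum
      norm_num at hwsum
    have hcard : Fintype.card ι ≤ 3 := by
      have h1 := hai.card_le_finrank_succ
      have h2 := Submodule.finrank_le (vectorSpan ℝ (Set.range zz))
      rw [finrank_euclideanSpace_fin] at h2
      omega
    have key : ∀ j : Fin k, ∃ i : ι, ⟪zz i, g j - zfun (zz i)⟫ < 0 := by
      intro j
      by_contra hcon
      push_neg at hcon
      have hsum0 : ∑ i, wf i * ⟪zz i, g j - p₀⟫ = 0 := by
        have h1 : ∑ i, wf i * ⟪zz i, g j - p₀⟫ = ⟪∑ i, wf i • zz i, g j - p₀⟫ := by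
          rw [sum_inner]
          apply Finset.sum_congr rfl
          intro i _
          rw [real_inner_smul_left]
        rw [h1, hwzero, inner_zero_left]
      have hterms : ∀ i : ι, 0 < wf i * ⟪zz i, g j - p₀⟫ := by
        intro i
        have hmS : zz i ∈ S := hrange ⟨i, rfl⟩
        have hsupp := hzprop (zz i) hmS
        have hdecomp : (⟪zz i, g j - p₀⟫ : ℝ) =
            ⟪zz i, g j - zfun (zz i)⟫ + ⟪zz i, zfun (zz i) - p₀⟫ := by
          rw [← inner_add_right]
          congr 1
          abel
        have h2 : 0 ≤ (⟪zz i, g j - zfun (zz i)⟫ : ℝ) := hcon i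
        have h3 : 0 < (⟪zz i, zfun (zz i) - p₀⟫ : ℝ) := by
          have := hsupp.2.1
          have heq : zfun (zz i) - p₀ = -(p₀ - zfun (zz i)) := by abel
          rw [heq, inner_neg_right]
          linarith
        have h4 : 0 < (⟪zz i, g j - p₀⟫ : ℝ) := by rw [hdecomp]; linarith
        exact mul_pos (hwpos i) h4
      have hpos : 0 < ∑ i, wf i * ⟪zz i, g j - p₀⟫ :=
        Finset.sum_pos (fun i _ => hterms i) Finset.univ_nonempty
      linarith
    choose F hF using key
    have hcardlt : Fintype.card ι < Fintype.card (Fin k) := by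
      rw [Fintype.card_fin]
      omega
    obtain ⟨j₁, j₂, hj12, hFeq⟩ := Fintype.exists_ne_map_eq_of_card_lt F hcardlt
    have hmS : zz (F j₁) ∈ S := hrange ⟨F j₁, rfl⟩
    refine suppAt_at_most_one_bad hk hginj hcount (hzprop (zz (F j₁)) hmS) hj12
      (hF j₁) ?_
    have := hF j₂
    rw [← hFeq] at this
    exact this
  · -- separation
    have hKconv : Convex ℝ (convexHull ℝ S) := convex_convexHull ℝ S
    have hKclosed : IsClosed (convexHull ℝ S) := (hSfin.isCompact_convexHull (𝕜 := ℝ)).isClosed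
    obtain ⟨f, c, hfc, hc0⟩ := geometric_hahn_banach_closed_point hKconv hKclosed hin
    rw [map_zero] at hc0
    set w : Pt := (InnerProductSpace.toDual ℝ Pt).symm f with hw
    have hwf : ∀ y : Pt, ⟪w, y⟫ = f y := fun y => InnerProductSpace.toDual_symm_apply
    have hfS : ∀ m ∈ S, (⟪m, w⟫ : ℝ) < c := by
      intro m hm
      rw [real_inner_comm, hwf]
      exact hfc m (subset_convexHull ℝ S hm)
    by_cases hw0 : w = 0
    · obtain ⟨u, hu⟩ := hunit
      obtain ⟨m, hmS, -⟩ := hSany u hu 1 one_pos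
      have := hfS m hmS
      rw [hw0, inner_zero_right] at this
      linarith
    · have hwn : 0 < ‖w‖ := norm_pos_iff.mpr hw0
      set u' : Pt := ‖w‖⁻¹ • w with hu'
      have hu'1 : ‖u'‖ = 1 := by
        rw [hu', norm_smul, norm_inv, norm_norm]
        field_simp
      obtain ⟨m, hmS, hmu'⟩ := hSany u' hu'1 (-c/(2*‖w‖))
        (div_pos (neg_pos.mpr hc0) (by positivity))
      have h1 : (⟪m, u'⟫ : ℝ) = ‖w‖⁻¹ * ⟪m, w⟫ := by
        rw [hu', real_inner_smul_right]
      have h2 := hfS m hmS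
      rw [h1] at hmu'
      have h3 : ‖w‖⁻¹ * ⟪m, w⟫ < ‖w‖⁻¹ * c := by
        apply mul_lt_mul_of_pos_left h2 (by positivity)
      have h4 : -(-c/(2*‖w‖)) = c/(2*‖w‖) := by ring
      rw [h4] at hmu'
      have h5 : c/(2*‖w‖) < ‖w‖⁻¹ * c := lt_trans hmu' h3
      have h6 : ‖w‖⁻¹ * c = c/‖w‖ := by ring
      rw [h6] at h5
      have h7 : c/(2*‖w‖) - c/‖w‖ = -c/(2*‖w‖) := by
        field_simp
        ring
      nlinarith [hwn, hc0]

end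
end NoHolesAux

/-- A full circulant polygon `P_k^{k-1}` with `k ≥ 4` has no holes:
the complement `ℝ² \ P` has no bounded connected component. -/
theorem fullCirculant_no_holes (P : Set Pt) (k : ℕ) (hk : 4 ≤ k)
    (g w : Fin k → Pt) (h : IsFullCirculant P k g w) :
    ∀ p : Pt, p ∉ P → ¬ Bornology.IsBounded (connectedComponentIn Pᶜ p) := by
  intro p hpP hb
  obtain ⟨⟨hcomp, hconn, hclos, E, hfr⟩, hginj, hwinj, hgP, hwP, hvis, hcount⟩ := h
  exact no_bounded_component hcomp.isClosed hfr hk hginj hcount hpP hb
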